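/- The integral ∫_ν^∞ exp(-(Δ²/2)·(√x - √ν)²) dx equals 2/Δ² + √(2πν)/Δ for all Δ > 0 and ν ≥ 0. -/

import Mathlib

open Real MeasureTheory

lemma integral_self_mul_gaussian : ∫ y in Set.Ioi (0:ℝ), y * Real.exp (-y^2/2) = 1 := by
  have h : ∀ y ∈ Set.Ioi (0:ℝ), HasDerivAt (fun y : ℝ => -Real.exp (-y^2/2))
      (y * Real.exp (-y^2/2)) y := by
    intro y _
    have : HasDerivAt (fun y : ℝ => -y^2/2) (-y) y := by
      have := (hasDerivAt_pow 2 y).neg.div_const 2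
      simpa using this.congr_deriv (by ring)
    have := (this.exp).neg
    exact this.congr_deriv (by ring)
  have hint : IntegrableOn (fun y : ℝ => y * Real.exp (-y^2/2)) (Set.Ioi 0) := by
    have := (integrable_mul_exp_neg_mul_sq (b := 1/2) (by norm_num)).integrableOn
      (s := Set.Ioi (0:ℝ))
    refine this.congr_fun (fun y _ => ?_) measurableSet_Ioi
    ring_nf
  have htop : Filter.Tendsto (fun y : ℝ => -Real.exp (-y^2/2)) Filter.atTop (nhds 0) := by
    rw [← neg_zero]
    refine Filter.Tendsto.neg ?_
    have : Filter.Tendsto (fun y : ℝ => -y^2/2) Filter.atTop Filter.atBot := by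
      apply Filter.Tendsto.atBot_div_const (by norm_num)
      exact Filter.tendsto_neg_atBot_iff.mpr (Filter.tendsto_pow_atTop two_ne_zero)
    exact Real.tendsto_exp_atBot.comp this
  have := MeasureTheory.integral_Ioi_of_hasDerivAt_of_tendsto
    (Continuous.continuousWithinAt (by continuity)) h hint htop
  simpa using this

theorem integral_sqrt_gaussian (Δ ν : ℝ) (hΔ : 0 < Δ) (hν : 0 ≤ ν) :
    ∫ x in Set.Ioi ν, Real.exp (-(Δ ^ 2 / 2) * (Real.sqrt x - Real.sqrt ν) ^ 2) =
      2 / Δ ^ 2 + Real.sqrt (2 * π * ν) / Δ := by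
  set f : ℝ → ℝ := fun y => (y / Δ + Real.sqrt ν) ^ 2 with hf
  set f' : ℝ → ℝ := fun y => 2 * (y / Δ + Real.sqrt ν) / Δ with hf'
  have hsν : 0 ≤ Real.sqrt ν := Real.sqrt_nonneg ν
  have himg : f '' Set.Ioi 0 = Set.Ioi ν := by
    ext x
    simp only [Set.mem_image, Set.mem_Ioi]
    constructor
    · rintro ⟨y, hy, rfl⟩
      have hy : (0:ℝ) < y / Δ := by positivity
      have h1 : Real.sqrt ν < y / Δ + Real.sqrt ν := by linarith
      calc ν = Real.sqrt ν ^ 2 := (Real.sq_sqrt hν).symm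
        _ < (y / Δ + Real.sqrt ν) ^ 2 := by
            apply pow_lt_pow_left₀ h1 hsν; norm_num
    · intro hx
      refine ⟨Δ * (Real.sqrt x - Real.sqrt ν), ?_, ?_⟩
      · have : Real.sqrt ν < Real.sqrt x := by
          apply Real.sqrt_lt_sqrt hν hx
        nlinarith
      · have : Δ * (Real.sqrt x - Real.sqrt ν) / Δ = Real.sqrt x - Real.sqrt ν := by
          field_simp
        simp only [f, this]
        rw [show Real.sqrt x - Real.sqrt ν + Real.sqrt ν = Real.sqrt x by ring]
        exact Real.sq_sqrt (le_of_lt (hν.trans_lt hx))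
  have hderiv : ∀ y ∈ Set.Ioi (0:ℝ), HasDerivWithinAt f (f' y) (Set.Ioi 0) y := by
    intro y _
    have : HasDerivAt f (2 * (y / Δ + Real.sqrt ν) * (1 / Δ)) y := by
      have h1 : HasDerivAt (fun y : ℝ => y / Δ + Real.sqrt ν) (1 / Δ) y := by
        simpa using ((hasDerivAt_id y).div_const Δ).add_const (Real.sqrt ν)
      exact (h1.pow 2).congr_deriv (by norm_num)
    refine (this.congr_deriv (by simp [f']; ring)).hasDerivWithinAt
  have hinj : Set.InjOn f (Set.Ioi 0) := by
    intro a ha b hb hab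
    simp only [Set.mem_Ioi] at ha hb
    have h1 : (0:ℝ) < a / Δ + Real.sqrt ν := by positivity
    have h2 : (0:ℝ) < b / Δ + Real.sqrt ν := by positivity
    simp only [f] at hab
    have heq : a / Δ + Real.sqrt ν = b / Δ + Real.sqrt ν := by
      have := sq_eq_sq_iff_abs_eq_abs (a := a / Δ + Real.sqrt ν) (b := b / Δ + Real.sqrt ν) |>.mp hab
      rwa [abs_of_pos h1, abs_of_pos h2] at this
    field_simp at heq
    linarith
  rw [← himg, integral_image_eq_integral_abs_deriv_smul measurableSet_Ioi hderiv hinj]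
  have hcongr : ∀ y ∈ Set.Ioi (0:ℝ),
      |f' y| • Real.exp (-(Δ ^ 2 / 2) * (Real.sqrt (f y) - Real.sqrt ν) ^ 2)
        = (2 / Δ ^ 2) * (y * Real.exp (-y^2/2))
          + (2 * Real.sqrt ν / Δ) * Real.exp (-(1/2) * y ^ 2) := by
    intro y hy
    simp only [Set.mem_Ioi] at hy
    have h1 : (0:ℝ) ≤ y / Δ + Real.sqrt ν := by positivity
    have hsq : Real.sqrt (f y) = y / Δ + Real.sqrt ν := Real.sqrt_sq h1
    have habs : |f' y| = 2 * (y / Δ + Real.sqrt ν) / Δ := by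
      apply abs_of_nonneg; positivity
    rw [smul_eq_mul, habs, hsq]
    have hexp : -(Δ ^ 2 / 2) * (y / Δ + Real.sqrt ν - Real.sqrt ν) ^ 2 = -y^2/2 := by
      field_simp; ring
    rw [hexp]
    have : -(1/2) * y^2 = -y^2/2 := by ring
    rw [this]; ring
  rw [MeasureTheory.setIntegral_congr_fun measurableSet_Ioi hcongr]
  have hi1 : IntegrableOn (fun y : ℝ => (2 / Δ ^ 2) * (y * Real.exp (-y^2/2)))
      (Set.Ioi 0) := by
    apply Integrable.const_mul
    have := (integrable_mul_exp_neg_mul_sq (b := 1/2) (by norm_num)).integrableOn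
      (s := Set.Ioi (0:ℝ))
    refine this.congr_fun (fun y _ => ?_) measurableSet_Ioi; ring_nf
  have hi2 : IntegrableOn (fun y : ℝ => (2 * Real.sqrt ν / Δ) * Real.exp (-(1/2) * y ^ 2))
      (Set.Ioi 0) := by
    exact ((integrable_exp_neg_mul_sq (by norm_num : (0:ℝ) < 1/2)).integrableOn).const_mul _
  rw [MeasureTheory.integral_add hi1 hi2, MeasureTheory.integral_const_mul, MeasureTheory.integral_const_mul,
    integral_self_mul_gaussian, integral_gaussian_Ioi]
  have h2 : Real.sqrt (π / (1/2)) = Real.sqrt (2 * π) := by norm_num; ring_nf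
  rw [h2]
  have h3 : Real.sqrt (2 * π * ν) = Real.sqrt (2 * π) * Real.sqrt ν := Real.sqrt_mul (by positivity) ν
  rw [h3]; field_simp
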